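/- Let G be a connected distance-regular graph on a finite set A, let B be a finite set, let ι : A → B be an injection, let ε > 0, and let M' be a channel matrix from A to B satisfying ε-differential privacy with respect to G such that M'(a', ι(a)) ≤ M'(a, ι(a)) for all a, a' ∈ A and M'(a,b) = 0 for every b ∈ B not in the range of ι. Then there exists a channel matrix M'' from A to B such that: (i) all diagonal entries of M'' are equal to the maximum entry of M'', i.e. M''(a, ι(a)) = max_{a'∈A, b∈B} M''(a',b) for every a ∈ A; (ii) M''(a,b) = 0 for every b ∈ B not in the range of ι; (iii) M'' satisfies ε-differential privacy with respect to G; and (iv) Σ_{b∈B} max_{a∈A} M''(a,b) = Σ_{b∈B} max_{a∈A} M'(a,b). -/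

import Mathlib

open Finset
open Finset


lemma aux_geo {A : Type*} {G : SimpleGraph A} (hconn : G.Connected) (x y : A)
    (h : G.dist x y ≠ 0) : ∃ w, G.Adj y w ∧ G.dist x w + 1 = G.dist x y := by
  have hne : y ≠ x := by rintro rfl; simp [SimpleGraph.dist_self] at h
  obtain ⟨p, hp⟩ := hconn.exists_walk_length_eq_dist x y
  obtain ⟨w, hadj, q, hq⟩ := SimpleGraph.Walk.exists_eq_cons_of_ne hne p.reverse
  refine ⟨w, hadj, ?_⟩
  have h1 : G.dist x w ≤ q.length := by
    rw [SimpleGraph.dist_comm]; exact SimpleGraph.dist_le q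
  have h2 : q.length + 1 = G.dist x y := by
    have := congrArg SimpleGraph.Walk.length hq
    simp only [SimpleGraph.Walk.length_reverse, SimpleGraph.Walk.length_cons] at this
    omega
    -- this : p.length = q.length + 1
  have h3 : G.dist x y ≤ G.dist x w + 1 := by
    have hwy : G.dist w y = 1 := SimpleGraph.dist_eq_one_iff_adj.mpr hadj.symm
    have := hconn.dist_triangle (u := x) (v := w) (w := y)
    omega
  omega

lemma aux_lt {A : Type*} [Fintype A] {G : SimpleGraph A} (hconn : G.Connected) (x y : A) :
    G.dist x y < Fintype.card A := by
  obtain ⟨p, hp, hl⟩ := hconn.exists_path_of_dist x y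
  rw [← hl]; exact hp.length_lt


lemma aux_pair_count {A : Type*} [Fintype A] {G : SimpleGraph A} [DecidableRel G.Adj] {c bb : ℕ → ℕ}
    (hcb : ∀ x y : A,
      (Finset.univ.filter fun w => G.Adj y w ∧ G.dist x w + 1 = G.dist x y).card
        = c (G.dist x y) ∧
      (Finset.univ.filter fun w => G.Adj y w ∧ G.dist x w = G.dist x y + 1).card
        = bb (G.dist x y))
    (x : A) (i : ℕ) :
    c (i+1) * (univ.filter fun y => G.dist x y = i+1).card
      = bb i * (univ.filter fun y => G.dist x y = i).card := by
  calc c (i+1) * (univ.filter fun y => G.dist x y = i+1).card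
      = ∑ y ∈ univ.filter fun y => G.dist x y = i+1, c (i+1) := by
        rw [Finset.sum_const, smul_eq_mul, mul_comm]
    _ = ∑ y ∈ univ.filter fun y => G.dist x y = i+1,
          (univ.filter fun w => G.Adj y w ∧ G.dist x w + 1 = G.dist x y).card := by
        refine Finset.sum_congr rfl fun y hy => ?_
        rw [Finset.mem_filter] at hy
        rw [(hcb x y).1, hy.2]
    _ = ∑ y, ∑ w, if (G.dist x y = i+1 ∧ G.Adj y w ∧ G.dist x w = i) then 1 else 0 := by
        rw [Finset.sum_filter]
        refine Finset.sum_congr rfl fun y _ => ?_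
        by_cases hy : G.dist x y = i + 1
        · rw [if_pos hy, Finset.card_filter]
          refine Finset.sum_congr rfl fun w _ => ?_
          refine if_congr ?_ rfl rfl
          constructor
          · rintro ⟨h1, h2⟩; exact ⟨hy, h1, by omega⟩
          · rintro ⟨_, h1, h2⟩; exact ⟨h1, by omega⟩
        · rw [if_neg hy]
          refine (Finset.sum_eq_zero fun w _ => ?_).symm
          rw [if_neg]; tauto
    _ = ∑ w, ∑ y, if (G.dist x y = i+1 ∧ G.Adj y w ∧ G.dist x w = i) then 1 else 0 :=
        Finset.sum_comm
    _ = ∑ w ∈ univ.filter fun w => G.dist x w = i,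
          (univ.filter fun y => G.Adj w y ∧ G.dist x y = G.dist x w + 1).card := by
        rw [Finset.sum_filter]
        refine Finset.sum_congr rfl fun w _ => ?_
        by_cases hw : G.dist x w = i
        · rw [if_pos hw, Finset.card_filter]
          refine (Finset.sum_congr rfl fun y _ => ?_).symm
          refine if_congr ?_ rfl rfl
          constructor
          · rintro ⟨h1, h2⟩; exact ⟨by omega, h1.symm, hw⟩
          · rintro ⟨h1, h2, _⟩; exact ⟨h2.symm, by omega⟩
        · refine ((Finset.sum_eq_zero fun y _ => ?_)).trans (if_neg hw).symm
          rw [if_neg]; tauto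
    _ = ∑ w ∈ univ.filter fun w => G.dist x w = i, bb i := by
        refine Finset.sum_congr rfl fun w hw => ?_
        rw [Finset.mem_filter] at hw
        rw [(hcb x w).2, hw.2]
    _ = bb i * (univ.filter fun y => G.dist x y = i).card := by
        rw [Finset.sum_const, smul_eq_mul, mul_comm]


lemma aux_cpos {A : Type*} [Fintype A] {G : SimpleGraph A} [DecidableRel G.Adj] {c bb : ℕ → ℕ}
    (hconn : G.Connected)
    (hcb : ∀ x y : A,
      (Finset.univ.filter fun w => G.Adj y w ∧ G.dist x w + 1 = G.dist x y).card
        = c (G.dist x y) ∧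
      (Finset.univ.filter fun w => G.Adj y w ∧ G.dist x w = G.dist x y + 1).card
        = bb (G.dist x y))
    {x y : A} {i : ℕ} (hy : G.dist x y = i + 1) : 1 ≤ c (i+1) := by
  obtain ⟨w, hadj, hw⟩ := aux_geo hconn x y (by omega)
  have h1 := (hcb x y).1
  rw [hy] at h1
  rw [← h1]
  refine Finset.card_pos.mpr ⟨w, ?_⟩
  rw [Finset.mem_filter]
  exact ⟨Finset.mem_univ _, hadj, by omega⟩


lemma aux_kconst {A : Type*} [Fintype A] {G : SimpleGraph A} [DecidableRel G.Adj] {c bb : ℕ → ℕ}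
    (hconn : G.Connected)
    (hcb : ∀ x y : A,
      (Finset.univ.filter fun w => G.Adj y w ∧ G.dist x w + 1 = G.dist x y).card
        = c (G.dist x y) ∧
      (Finset.univ.filter fun w => G.Adj y w ∧ G.dist x w = G.dist x y + 1).card
        = bb (G.dist x y)) :
    ∀ (i : ℕ) (x x' : A),
      (univ.filter fun y => G.dist x y = i).card
        = (univ.filter fun y => G.dist x' y = i).card := by
  intro i
  induction i with
  | zero =>
    intro x x'
    have h : ∀ z : A, (univ.filter fun y => G.dist z y = 0) = {z} := by
      intro z
      ext y
      simp [hconn.dist_eq_zero_iff, eq_comm]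
    rw [h x, h x']; simp
  | succ i ih =>
    intro x x'
    by_cases hne : (univ.filter fun y => G.dist x y = i+1).card = 0
        ∧ (univ.filter fun y => G.dist x' y = i+1).card = 0
    · rw [hne.1, hne.2]
    · have hc : 1 ≤ c (i + 1) := by
        rcases not_and_or.mp hne with h | h
        · obtain ⟨y, hy⟩ := Finset.card_pos.mp (Nat.pos_of_ne_zero h)
          rw [Finset.mem_filter] at hy
          exact aux_cpos hconn hcb hy.2
        · obtain ⟨y, hy⟩ := Finset.card_pos.mp (Nat.pos_of_ne_zero h)
          rw [Finset.mem_filter] at hy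
          exact aux_cpos hconn hcb hy.2
      have h1 := aux_pair_count hcb x i
      have h2 := aux_pair_count hcb x' i
      rw [ih x x'] at h1
      have := h1.trans h2.symm
      exact Nat.eq_of_mul_eq_mul_left hc this

/-- `ε`-differential privacy of a channel matrix with respect to a graph. -/
def SatisfiesDP {A B : Type*} (G : SimpleGraph A) (ε : ℝ) (M : A → B → ℝ) : Prop :=
  ∀ (b : B) (a a' : A), G.Adj a a' → M a b ≤ Real.exp ε * M a' b

/-- Distance-regularity. -/
def IsDistanceRegular {A : Type*} [Fintype A] (G : SimpleGraph A) [DecidableRel G.Adj] : Prop :=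
  ∃ c b : ℕ → ℕ, ∀ x y : A,
    (Finset.univ.filter fun w => G.Adj y w ∧ G.dist x w + 1 = G.dist x y).card
      = c (G.dist x y) ∧
    (Finset.univ.filter fun w => G.Adj y w ∧ G.dist x w = G.dist x y + 1).card
      = b (G.dist x y)

theorem stmt11 {A B : Type*} [Fintype A] [Nonempty A] [Fintype B] [Nonempty B]
    (G : SimpleGraph A) [DecidableRel G.Adj]
    (hconn : G.Connected) (hDR : IsDistanceRegular G)
    (ι : A → B) (hι : Function.Injective ι)
    (ε : ℝ) (hε : 0 < ε)
    (M' : A → B → ℝ)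
    (hM0 : ∀ a b, 0 ≤ M' a b)
    (hM1 : ∀ a, ∑ b, M' a b = 1)
    (hdp : SatisfiesDP G ε M')
    (hdiag : ∀ a a' : A, M' a' (ι a) ≤ M' a (ι a))
    (hzero : ∀ (a : A) (b : B), b ∉ Set.range ι → M' a b = 0) :
    ∃ M'' : A → B → ℝ,
      (∀ a b, 0 ≤ M'' a b) ∧
      (∀ a, ∑ b, M'' a b = 1) ∧
      (∀ a : A, M'' a (ι a)
        = Finset.univ.sup' Finset.univ_nonempty (fun p : A × B => M'' p.1 p.2)) ∧
      (∀ (a : A) (b : B), b ∉ Set.range ι → M'' a b = 0) ∧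
      SatisfiesDP G ε M'' ∧
      (∑ b, Finset.univ.sup' Finset.univ_nonempty (fun a => M'' a b))
        = (∑ b, Finset.univ.sup' Finset.univ_nonempty (fun a => M' a b)) := by
  classical
  obtain ⟨c, bb, hcb⟩ := hDR
  set n := Fintype.card A with hn
  have hnpos : 0 < n := Fintype.card_pos
  obtain ⟨x0⟩ := (inferInstance : Nonempty A)
  set k : ℕ → ℕ := fun i => (univ.filter fun y => G.dist x0 y = i).card with hkdef
  have hk : ∀ (x : A) (i : ℕ), (univ.filter fun y => G.dist x y = i).card = k i :=
    fun x i => aux_kconst hconn hcb i x x0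
  have hk' : ∀ (y : A) (i : ℕ), (univ.filter fun a => G.dist a y = i).card = k i := by
    intro y i
    rw [← hk y i]
    congr 1
    ext a
    simp [SimpleGraph.dist_comm]
  have hk0 : k 0 = 1 := by
    have : (univ.filter fun y => G.dist x0 y = 0) = {x0} := by
      ext y; simp [hconn.dist_eq_zero_iff, eq_comm]
    show (univ.filter fun y => G.dist x0 y = 0).card = 1
    rw [this]; simp
  have hdlt : ∀ x y : A, G.dist x y < n := fun x y => aux_lt hconn x y
  set S : ℕ → ℝ := fun i => ∑ a, ∑ y, if G.dist a y = i then M' a (ι y) else 0 with hSdef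
  have hSnn : ∀ i, 0 ≤ S i := by
    intro i
    refine Finset.sum_nonneg fun a _ => Finset.sum_nonneg fun y _ => ?_
    split <;> simp [hM0]
  have hSk : ∀ i, k i = 0 → S i = 0 := by
    intro i hki
    refine Finset.sum_eq_zero fun a _ => Finset.sum_eq_zero fun y _ => ?_
    rw [if_neg]
    intro hd
    have := hk a i
    rw [hki, Finset.card_eq_zero] at this
    exact absurd (Finset.mem_filter.mpr ⟨mem_univ y, hd⟩) (by rw [this]; exact notMem_empty y)
  have hS0 : S 0 = ∑ y, M' y (ι y) := by
    rw [hSdef]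
    refine Finset.sum_congr rfl fun a _ => ?_
    have h1 : ∀ y : A, (if G.dist a y = 0 then M' a (ι y) else 0)
        = (if a = y then M' a (ι y) else 0) :=
      fun y => if_congr hconn.dist_eq_zero_iff rfl rfl
    simp only [h1]
    rw [Finset.sum_ite_eq univ a (fun y => M' a (ι y)), if_pos (mem_univ a)]
  have hrowM' : ∀ a, ∑ y, M' a (ι y) = 1 := by
    intro a
    have h1 : ∑ y, M' a (ι y) = ∑ b ∈ univ.image ι, M' a b :=
      (Finset.sum_image (fun x _ y _ h => hι h)).symm
    rw [h1, ← hM1 a]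
    refine Finset.sum_subset (Finset.subset_univ _) fun b _ hb => hzero a b ?_
    simp only [Finset.mem_image, mem_univ, true_and] at hb
    rintro ⟨y, rfl⟩
    exact hb ⟨y, rfl⟩
  have hStot : ∑ i ∈ range n, S i = n := by
    rw [hSdef]
    rw [Finset.sum_comm]
    have : ∀ a : A, ∑ i ∈ range n, ∑ y, (if G.dist a y = i then M' a (ι y) else 0)
        = ∑ y, M' a (ι y) := by
      intro a
      rw [Finset.sum_comm]
      refine Finset.sum_congr rfl fun y _ => ?_
      rw [Finset.sum_ite_eq (range n) (G.dist a y) (fun _ => M' a (ι y)),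
        if_pos (Finset.mem_range.mpr (hdlt a y))]
    rw [Finset.sum_congr rfl fun a _ => this a]
    rw [Finset.sum_congr rfl fun a _ => hrowM' a]
    simp
    exact hn.symm
  have hSle : ∀ i, S i ≤ (k i : ℝ) * S 0 := by
    intro i
    have h1 : S i ≤ ∑ a, ∑ y, (if G.dist a y = i then M' y (ι y) else 0) := by
      refine Finset.sum_le_sum fun a _ => Finset.sum_le_sum fun y _ => ?_
      split
      · exact hdiag y a
      · exact le_refl 0
    refine h1.trans (le_of_eq ?_)
    rw [Finset.sum_comm]
    rw [hS0, Finset.mul_sum]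
    refine Finset.sum_congr rfl fun y _ => ?_
    rw [← Finset.sum_filter, Finset.sum_const, hk' y i, nsmul_eq_mul]
  set g : ℕ → ℝ := fun i => S i / (n * k i) with hgdef
  have hgnn : ∀ i, 0 ≤ g i := fun i => div_nonneg (hSnn i) (mul_nonneg (Nat.cast_nonneg _) (Nat.cast_nonneg _))
  have hg0 : g 0 = S 0 / n := by rw [hgdef]; simp [hk0]
  have hgle : ∀ i, g i ≤ g 0 := by
    intro i
    by_cases hki : k i = 0
    · have hz : g i = 0 := by simp [hgdef, hSk i hki]
      rw [hz]; exact hgnn 0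
    · have hki1 : (1 : ℝ) ≤ (k i : ℝ) := by
        exact_mod_cast Nat.one_le_iff_ne_zero.mpr hki
      rw [hg0]
      show S i / ((n : ℝ) * (k i : ℝ)) ≤ S 0 / (n : ℝ)
      rw [div_le_div_iff₀ (mul_pos (Nat.cast_pos.mpr hnpos) (lt_of_lt_of_le one_pos hki1)) (by positivity)]
      have := mul_le_mul_of_nonneg_right (hSle i) (le_of_lt (by positivity : (0:ℝ) < n))
      calc S i * n ≤ (k i : ℝ) * S 0 * n := this
        _ = S 0 * (n * k i) := by ring
  have hkg : ∀ i, (k i : ℝ) * g i = S i / n := by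
    intro i
    by_cases hki : k i = 0
    · simp [hgdef, hki, hSk i hki]
    · show (k i : ℝ) * (S i / ((n : ℝ) * (k i : ℝ))) = S i / n
      have h1 : ((k i : ℝ)) ≠ 0 := Nat.cast_ne_zero.mpr hki
      have h2 : ((n : ℝ)) ≠ 0 := Nat.cast_ne_zero.mpr hnpos.ne'
      field_simp
  have hpc : ∀ i, (c (i+1)) * (k (i+1)) = (bb i) * (k i) := by
    intro i
    have h := aux_pair_count hcb x0 i
    rw [hk x0 (i+1), hk x0 i] at h
    exact h
  have ID1 : ∀ i, (c (i+1) : ℝ) * S (i+1)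
      = ∑ a, ∑ y, ∑ w, if (G.dist a y = i+1 ∧ G.Adj a w ∧ G.dist y w = i)
          then M' a (ι y) else 0 := by
    intro i
    show (c (i+1) : ℝ) * (∑ a, ∑ y, if G.dist a y = i+1 then M' a (ι y) else 0) = _
    rw [Finset.mul_sum]
    refine Finset.sum_congr rfl fun a _ => ?_
    rw [Finset.mul_sum]
    refine Finset.sum_congr rfl fun y _ => ?_
    by_cases hd : G.dist a y = i + 1
    · rw [if_pos hd]
      have hcard : (univ.filter fun w => G.Adj a w ∧ G.dist y w = i).card = c (i+1) := by
        have h1 := (hcb y a).1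
        have hda : G.dist y a = i + 1 := by rw [SimpleGraph.dist_comm]; exact hd
        rw [hda] at h1
        rw [← h1]
        congr 1
        ext w
        simp only [Finset.mem_filter, hda]
        constructor
        · rintro ⟨hw, h2, h3⟩; exact ⟨hw, h2, by omega⟩
        · rintro ⟨hw, h2, h3⟩; exact ⟨hw, h2, by omega⟩
      calc (c (i+1) : ℝ) * M' a (ι y)
          = ((univ.filter fun w => G.Adj a w ∧ G.dist y w = i).card : ℝ) * M' a (ι y) := by
            rw [hcard]
        _ = ∑ _w ∈ univ.filter fun w => G.Adj a w ∧ G.dist y w = i, M' a (ι y) := by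
            rw [Finset.sum_const, nsmul_eq_mul]
        _ = ∑ w, if (G.dist a y = i+1 ∧ G.Adj a w ∧ G.dist y w = i) then M' a (ι y) else 0 := by
            rw [Finset.sum_filter]
            refine Finset.sum_congr rfl fun w _ => ?_
            refine (if_congr ?_ rfl rfl)
            tauto
    · rw [if_neg hd, mul_zero]
      refine (Finset.sum_eq_zero fun w _ => ?_).symm
      rw [if_neg]; tauto
  have ID2 : ∀ i, (bb i : ℝ) * S i
      = ∑ a, ∑ y, ∑ w, if (G.dist a y = i+1 ∧ G.Adj a w ∧ G.dist y w = i)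
          then M' w (ι y) else 0 := by
    intro i
    have swap : (∑ a, ∑ y, ∑ w, if (G.dist a y = i+1 ∧ G.Adj a w ∧ G.dist y w = i)
          then M' w (ι y) else 0)
        = ∑ w, ∑ y, ∑ a, if (G.dist a y = i+1 ∧ G.Adj a w ∧ G.dist y w = i)
          then M' w (ι y) else 0 := by
      calc (∑ a, ∑ y, ∑ w, if (G.dist a y = i+1 ∧ G.Adj a w ∧ G.dist y w = i)
              then M' w (ι y) else 0)
          = ∑ a, ∑ w, ∑ y, if (G.dist a y = i+1 ∧ G.Adj a w ∧ G.dist y w = i)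
              then M' w (ι y) else 0 :=
            Finset.sum_congr rfl fun a _ => Finset.sum_comm
        _ = ∑ w, ∑ a, ∑ y, if (G.dist a y = i+1 ∧ G.Adj a w ∧ G.dist y w = i)
              then M' w (ι y) else 0 := Finset.sum_comm
        _ = ∑ w, ∑ y, ∑ a, if (G.dist a y = i+1 ∧ G.Adj a w ∧ G.dist y w = i)
              then M' w (ι y) else 0 :=
            Finset.sum_congr rfl fun w _ => Finset.sum_comm
    rw [swap]
    show (bb i : ℝ) * (∑ w, ∑ y, if G.dist w y = i then M' w (ι y) else 0) = _
    rw [Finset.mul_sum]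
    refine Finset.sum_congr rfl fun w _ => ?_
    rw [Finset.mul_sum]
    refine Finset.sum_congr rfl fun y _ => ?_
    by_cases hd : G.dist w y = i
    · rw [if_pos hd]
      have hdyw : G.dist y w = i := by rw [SimpleGraph.dist_comm]; exact hd
      have hcard : (univ.filter fun a => G.Adj w a ∧ G.dist y a = i + 1).card
          = bb i := by
        have h1 := (hcb y w).2
        rw [hdyw] at h1
        exact h1
      calc (bb i : ℝ) * M' w (ι y)
          = ((univ.filter fun a => G.Adj w a ∧ G.dist y a = i + 1).card : ℝ)
              * M' w (ι y) := by rw [hcard]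
        _ = ∑ _a ∈ univ.filter fun a => G.Adj w a ∧ G.dist y a = i + 1,
              M' w (ι y) := by rw [Finset.sum_const, nsmul_eq_mul]
        _ = ∑ a, if (G.dist a y = i+1 ∧ G.Adj a w ∧ G.dist y w = i)
              then M' w (ι y) else 0 := by
            rw [Finset.sum_filter]
            refine Finset.sum_congr rfl fun a _ => ?_
            refine (if_congr ?_ rfl rfl)
            have hco : G.dist a y = G.dist y a := SimpleGraph.dist_comm
            constructor
            · rintro ⟨p1, p2⟩
              exact ⟨by omega, p1.symm, hdyw⟩
            · rintro ⟨p1, p2, p3⟩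
              exact ⟨p2.symm, by omega⟩
    · rw [if_neg hd, mul_zero]
      refine (Finset.sum_eq_zero fun a _ => ?_).symm
      rw [if_neg]
      rintro ⟨h1, h2, h3⟩
      rw [SimpleGraph.dist_comm] at h3
      exact hd h3
  have main1 : ∀ i, (c (i+1) : ℝ) * S (i+1) ≤ Real.exp ε * ((bb i : ℝ) * S i) := by
    intro i
    rw [ID1 i, ID2 i, Finset.mul_sum]
    refine Finset.sum_le_sum fun a _ => ?_
    rw [Finset.mul_sum]
    refine Finset.sum_le_sum fun y _ => ?_
    rw [Finset.mul_sum]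
    refine Finset.sum_le_sum fun w _ => ?_
    rw [mul_ite, mul_zero]
    split
    · next h => exact hdp (ι y) a w h.2.1
    · exact le_refl 0
  have main2 : ∀ i, (bb i : ℝ) * S i ≤ Real.exp ε * ((c (i+1) : ℝ) * S (i+1)) := by
    intro i
    rw [ID1 i, ID2 i, Finset.mul_sum]
    refine Finset.sum_le_sum fun a _ => ?_
    rw [Finset.mul_sum]
    refine Finset.sum_le_sum fun y _ => ?_
    rw [Finset.mul_sum]
    refine Finset.sum_le_sum fun w _ => ?_
    rw [mul_ite, mul_zero]
    split
    · next h => exact hdp (ι y) w a h.2.1.symm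
    · exact le_refl 0
  have hposfacts : ∀ i, k (i+1) ≠ 0 →
      1 ≤ c (i+1) ∧ bb i ≠ 0 ∧ k i ≠ 0 := by
    intro i hki
    have hpos : 0 < (univ.filter fun y => G.dist x0 y = i+1).card := by
      rw [hk x0 (i+1)]; exact Nat.pos_of_ne_zero hki
    obtain ⟨y, hy⟩ := Finset.card_pos.mp hpos
    rw [Finset.mem_filter] at hy
    have hc1 : 1 ≤ c (i+1) := aux_cpos hconn hcb hy.2
    have hne : c (i+1) * k (i+1) ≠ 0 := Nat.mul_ne_zero (by omega) hki
    rw [hpc i] at hne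
    have := Nat.mul_ne_zero_iff.mp hne
    exact ⟨hc1, this.1, this.2⟩
  have gup : ∀ i, k (i+1) ≠ 0 → g (i+1) ≤ Real.exp ε * g i := by
    intro i hki
    obtain ⟨hc1, hbne, hkne⟩ := hposfacts i hki
    have hB : (1:ℝ) ≤ (bb i : ℝ) := by exact_mod_cast Nat.one_le_iff_ne_zero.mpr hbne
    have hKi : (0:ℝ) < (k i : ℝ) := by exact_mod_cast Nat.pos_of_ne_zero hkne
    have hKi1 : (0:ℝ) < (k (i+1) : ℝ) := by exact_mod_cast Nat.pos_of_ne_zero hki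
    have hN : (0:ℝ) < (n:ℝ) := by exact_mod_cast hnpos
    have heq : (c (i+1) : ℝ) * (k (i+1):ℝ) = (bb i:ℝ) * (k i:ℝ) := by exact_mod_cast hpc i
    show S (i+1) / ((n:ℝ) * (k (i+1):ℝ)) ≤ Real.exp ε * (S i / ((n:ℝ)*(k i:ℝ)))
    rw [← mul_div_assoc, div_le_div_iff₀ (mul_pos hN hKi1) (mul_pos hN hKi)]
    have key := mul_le_mul_of_nonneg_right (main1 i)
      (le_of_lt (mul_pos hN hKi1 : (0:ℝ) < (n:ℝ)*(k (i+1):ℝ)))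
    have h2 : (bb i : ℝ) * (S (i+1) * ((n:ℝ) * (k i:ℝ)))
        ≤ (bb i : ℝ) * (Real.exp ε * S i * ((n:ℝ) * (k (i+1):ℝ))) := by
      calc (bb i : ℝ) * (S (i+1) * ((n:ℝ) * (k i:ℝ)))
          = ((c (i+1):ℝ) * S (i+1)) * ((n:ℝ) * (k (i+1):ℝ)) := by
            linear_combination (-((n:ℝ) * S (i+1))) * heq
        _ ≤ (Real.exp ε * ((bb i:ℝ) * S i)) * ((n:ℝ)*(k (i+1):ℝ)) := key
        _ = (bb i:ℝ) * (Real.exp ε * S i * ((n:ℝ)*(k (i+1):ℝ))) := by ring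
    exact le_of_mul_le_mul_left h2 (lt_of_lt_of_le zero_lt_one hB)
  have gdown : ∀ i, k (i+1) ≠ 0 → g i ≤ Real.exp ε * g (i+1) := by
    intro i hki
    obtain ⟨hc1, hbne, hkne⟩ := hposfacts i hki
    have hC : (1:ℝ) ≤ (c (i+1) : ℝ) := by exact_mod_cast hc1
    have hKi : (0:ℝ) < (k i : ℝ) := by exact_mod_cast Nat.pos_of_ne_zero hkne
    have hKi1 : (0:ℝ) < (k (i+1) : ℝ) := by exact_mod_cast Nat.pos_of_ne_zero hki
    have hN : (0:ℝ) < (n:ℝ) := by exact_mod_cast hnpos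
    have heq : (c (i+1) : ℝ) * (k (i+1):ℝ) = (bb i:ℝ) * (k i:ℝ) := by exact_mod_cast hpc i
    show S i / ((n:ℝ) * (k i:ℝ)) ≤ Real.exp ε * (S (i+1) / ((n:ℝ)*(k (i+1):ℝ)))
    rw [← mul_div_assoc, div_le_div_iff₀ (mul_pos hN hKi) (mul_pos hN hKi1)]
    have key := mul_le_mul_of_nonneg_right (main2 i)
      (le_of_lt (mul_pos hN hKi : (0:ℝ) < (n:ℝ)*(k i:ℝ)))
    have h2 : (c (i+1) : ℝ) * (S i * ((n:ℝ) * (k (i+1):ℝ)))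
        ≤ (c (i+1) : ℝ) * (Real.exp ε * S (i+1) * ((n:ℝ) * (k i:ℝ))) := by
      calc (c (i+1) : ℝ) * (S i * ((n:ℝ) * (k (i+1):ℝ)))
          = ((bb i:ℝ) * S i) * ((n:ℝ) * (k i:ℝ)) := by
            linear_combination ((n:ℝ) * S i) * heq
        _ ≤ (Real.exp ε * ((c (i+1):ℝ) * S (i+1))) * ((n:ℝ)*(k i:ℝ)) := key
        _ = (c (i+1):ℝ) * (Real.exp ε * S (i+1) * ((n:ℝ)*(k i:ℝ))) := by ring
    exact le_of_mul_le_mul_left h2 (lt_of_lt_of_le zero_lt_one hC)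
  set M'' : A → B → ℝ := fun a b => ∑ a', if ι a' = b then g (G.dist a a') else 0
    with hM''def
  have hM''at : ∀ a a', M'' a (ι a') = g (G.dist a a') := by
    intro a a'
    show (∑ x, if ι x = ι a' then g (G.dist a x) else 0) = _
    have h1 : ∀ x : A, (if ι x = ι a' then g (G.dist a x) else 0)
        = (if x = a' then g (G.dist a x) else 0) :=
      fun x => if_congr hι.eq_iff rfl rfl
    simp only [h1]
    rw [Finset.sum_ite_eq' univ a' (fun x => g (G.dist a x)), if_pos (mem_univ _)]
  have hM''zero : ∀ (a : A) (b : B), b ∉ Set.range ι → M'' a b = 0 := by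
    intro a b hb
    refine Finset.sum_eq_zero fun x _ => ?_
    rw [if_neg]
    exact fun h => hb ⟨x, h⟩
  have hM''nn : ∀ a b, 0 ≤ M'' a b := by
    intro a b
    refine Finset.sum_nonneg fun x _ => ?_
    split
    · exact hgnn _
    · exact le_refl 0
  have hrow'' : ∀ a, ∑ b, M'' a b = 1 := by
    intro a
    show (∑ b, ∑ x, if ι x = b then g (G.dist a x) else 0) = 1
    rw [Finset.sum_comm]
    have h1 : ∀ x : A, (∑ b, if ι x = b then g (G.dist a x) else 0) = g (G.dist a x) := by
      intro x
      rw [Finset.sum_ite_eq univ (ι x) (fun _ => g (G.dist a x)), if_pos (mem_univ _)]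
    rw [Finset.sum_congr rfl fun x _ => h1 x]
    have h2 : ∀ x : A, g (G.dist a x) = ∑ i ∈ range n, if G.dist a x = i then g i else 0 := by
      intro x
      rw [Finset.sum_ite_eq (range n) (G.dist a x) (fun i => g i),
        if_pos (Finset.mem_range.mpr (hdlt a x))]
    rw [Finset.sum_congr rfl fun x _ => h2 x, Finset.sum_comm]
    have h3 : ∀ i, (∑ x, if G.dist a x = i then g i else 0) = (k i : ℝ) * g i := by
      intro i
      rw [← Finset.sum_filter, Finset.sum_const, hk a i, nsmul_eq_mul]
    rw [Finset.sum_congr rfl fun i _ => h3 i, Finset.sum_congr rfl fun i _ => hkg i,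
      ← Finset.sum_div, hStot]
    have hNne : ((n:ℝ)) ≠ 0 := Nat.cast_ne_zero.mpr hnpos.ne'
    field_simp
  have hsupG : Finset.univ.sup' Finset.univ_nonempty (fun p : A × B => M'' p.1 p.2) = g 0 := by
    apply le_antisymm
    · refine Finset.sup'_le _ _ fun p _ => ?_
      by_cases hb : p.2 ∈ Set.range ι
      · obtain ⟨a', ha'⟩ := hb
        rw [← ha', hM''at]
        exact hgle _
      · rw [hM''zero _ _ hb]
        exact hgnn 0
    · have h := Finset.le_sup' (fun p : A × B => M'' p.1 p.2) (Finset.mem_univ (x0, ι x0))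
      calc g 0 = M'' x0 (ι x0) := by rw [hM''at, SimpleGraph.dist_self]
        _ ≤ _ := h
  have hcol : ∀ y : A,
      Finset.univ.sup' Finset.univ_nonempty (fun a => M'' a (ι y)) = g 0 := by
    intro y
    apply le_antisymm
    · refine Finset.sup'_le _ _ fun a _ => ?_
      rw [hM''at]
      exact hgle _
    · have h := Finset.le_sup' (fun a => M'' a (ι y)) (Finset.mem_univ y)
      calc g 0 = M'' y (ι y) := by rw [hM''at, SimpleGraph.dist_self]
        _ ≤ _ := h
  have hcol0 : ∀ b : B, b ∉ Set.range ι →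
      Finset.univ.sup' Finset.univ_nonempty (fun a => M'' a b) = 0 := by
    intro b hb
    apply le_antisymm
    · refine Finset.sup'_le _ _ fun a _ => le_of_eq (hM''zero a b hb)
    · have h := Finset.le_sup' (fun a => M'' a b) (Finset.mem_univ x0)
      calc (0:ℝ) = M'' x0 b := (hM''zero x0 b hb).symm
        _ ≤ _ := h
  have hcolM : ∀ y : A,
      Finset.univ.sup' Finset.univ_nonempty (fun a => M' a (ι y)) = M' y (ι y) := by
    intro y
    apply le_antisymm
    · exact Finset.sup'_le _ _ fun a _ => hdiag y a
    · exact Finset.le_sup' (fun a => M' a (ι y)) (Finset.mem_univ y)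
  have hcolM0 : ∀ b : B, b ∉ Set.range ι →
      Finset.univ.sup' Finset.univ_nonempty (fun a => M' a b) = 0 := by
    intro b hb
    apply le_antisymm
    · exact Finset.sup'_le _ _ fun a _ => le_of_eq (hzero a b hb)
    · have h := Finset.le_sup' (fun a => M' a b) (Finset.mem_univ x0)
      calc (0:ℝ) = M' x0 b := (hzero x0 b hb).symm
        _ ≤ _ := h
  have hsum : ∀ (f : B → ℝ), (∀ b, b ∉ Set.range ι → f b = 0) →
      ∑ b, f b = ∑ y, f (ι y) := by
    intro f hf
    rw [← Finset.sum_image (g := ι) (f := f) (fun x _ y _ h => hι h)]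
    refine (Finset.sum_subset (Finset.subset_univ _) fun b _ hb => hf b ?_).symm
    simp only [Finset.mem_image, mem_univ, true_and] at hb
    rintro ⟨y, rfl⟩
    exact hb ⟨y, rfl⟩
  refine ⟨M'', hM''nn, hrow'', ?_, hM''zero, ?_, ?_⟩
  · intro a
    rw [hM''at, SimpleGraph.dist_self, hsupG]
  · intro b a1 a2 hadj
    by_cases hb : b ∈ Set.range ι
    · obtain ⟨y, rfl⟩ := hb
      rw [hM''at, hM''at]
      have h12 : G.dist a1 a2 = 1 := SimpleGraph.dist_eq_one_iff_adj.mpr hadj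
      have h21 : G.dist a2 a1 = 1 := SimpleGraph.dist_eq_one_iff_adj.mpr hadj.symm
      have t1 : G.dist a1 y ≤ G.dist a1 a2 + G.dist a2 y :=
        hconn.dist_triangle (u := a1) (v := a2) (w := y)
      have t2 : G.dist a2 y ≤ G.dist a2 a1 + G.dist a1 y :=
        hconn.dist_triangle (u := a2) (v := a1) (w := y)
      have hE1 : (1:ℝ) ≤ Real.exp ε := by
        rw [← Real.exp_zero]
        exact Real.exp_le_exp.mpr hε.le
      rcases (by omega : G.dist a1 y = G.dist a2 y ∨ G.dist a1 y = G.dist a2 y + 1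
          ∨ G.dist a2 y = G.dist a1 y + 1) with h | h | h
      · rw [h]
        nlinarith [hgnn (G.dist a2 y)]
      · rw [h]
        apply gup
        intro hk1
        have hcz : (univ.filter fun z => G.dist a1 z = G.dist a2 y + 1).card = 0 := by
          rw [hk a1]; exact hk1
        rw [Finset.card_eq_zero] at hcz
        have hy : y ∈ univ.filter fun z => G.dist a1 z = G.dist a2 y + 1 :=
          Finset.mem_filter.mpr ⟨mem_univ _, h⟩
        rw [hcz] at hy
        exact absurd hy (notMem_empty y)
      · have hk1 : k (G.dist a1 y + 1) ≠ 0 := by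
          intro hk1
          have hcz : (univ.filter fun z => G.dist a2 z = G.dist a1 y + 1).card = 0 := by
            rw [hk a2]; exact hk1
          rw [Finset.card_eq_zero] at hcz
          have hy : y ∈ univ.filter fun z => G.dist a2 z = G.dist a1 y + 1 :=
            Finset.mem_filter.mpr ⟨mem_univ _, h⟩
          rw [hcz] at hy
          exact absurd hy (notMem_empty y)
        have := gdown (G.dist a1 y) hk1
        rw [h]
        exact this
    · rw [hM''zero a1 b hb, hM''zero a2 b hb, mul_zero]
  · have hL : (∑ b, Finset.univ.sup' Finset.univ_nonempty (fun a => M'' a b))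
        = ∑ y : A, Finset.univ.sup' Finset.univ_nonempty (fun a => M'' a (ι y)) :=
      hsum _ hcol0
    have hR : (∑ b, Finset.univ.sup' Finset.univ_nonempty (fun a => M' a b))
        = ∑ y : A, Finset.univ.sup' Finset.univ_nonempty (fun a => M' a (ι y)) :=
      hsum _ hcolM0
    rw [hL, hR]
    rw [Finset.sum_congr rfl fun y (_ : y ∈ univ) => hcol y]
    rw [Finset.sum_congr rfl fun y (_ : y ∈ univ) => hcolM y]
    rw [← hS0, Finset.sum_const, nsmul_eq_mul, Finset.card_univ, hg0]
    have hNne : ((n:ℝ)) ≠ 0 := Nat.cast_ne_zero.mpr hnpos.ne'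
    show (n : ℝ) * (S 0 / n) = S 0
    field_simp
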